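/- Let U ⊆ ℂ be a nonempty open preconnected set, let b, c ∈ ℝ, and let f, g : ℂ → ℂ be analytic on U such that g'(z) ≠ 0 and f(z) + b + i·c ≠ 0 for all z ∈ U, and such that g'(z)·(f'(z))² = (f(z)+b+i·c)·(g'(z)·f''(z) − g''(z)·f'(z)) for all z ∈ U. Then there exist constants z₁, z₂ ∈ ℂ such that f(z) = z₁·exp(z₂·g(z)) − b − i·c for all z ∈ U. -/
import Mathlib


open Complex

/-- An analytic function with vanishing derivative on an open preconnected set is constant. -/
lemma const_of_deriv_zero_aux (U : Set ℂ) (hU : IsOpen U) (hUconn : IsPreconnected U)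
    (h : ℂ → ℂ) (hh : AnalyticOnNhd ℂ h U) (hd : ∀ z ∈ U, deriv h z = 0)
    {z₀ : ℂ} (hz₀ : z₀ ∈ U) : ∀ z ∈ U, h z = h z₀ := by
  obtain ⟨ε, hε, hball⟩ := Metric.isOpen_iff.1 hU z₀ hz₀
  have hloc : ∀ y ∈ Metric.ball z₀ ε, h y = h z₀ := by
    intro y hy
    refine (convex_ball z₀ ε).is_const_of_fderivWithin_eq_zero
      (fun x hx => ((hh x (hball hx)).differentiableAt).differentiableWithinAt)
      (fun x hx => ?_) hy (Metric.mem_ball_self hε)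
    rw [fderivWithin_of_isOpen Metric.isOpen_ball hx]
    have hD : HasDerivAt h 0 x := by
      have := ((hh x (hball hx)).differentiableAt).hasDerivAt
      rwa [hd x (hball hx)] at this
    rw [hD.hasFDerivAt.fderiv]
    exact ContinuousLinearMap.ext fun v => by simp
  have hev : h =ᶠ[nhds z₀] fun _ => h z₀ :=
    Filter.eventuallyEq_of_mem (Metric.ball_mem_nhds z₀ hε) hloc
  intro z hz
  exact hh.eqOn_of_preconnected_of_eventuallyEq (analyticOnNhd_const) hUconn hz₀ hev hz

/-- Lemma 3.3, case a = 1. -/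
theorem stmt_12 (U : Set ℂ) (hU : IsOpen U) (hUne : U.Nonempty)
    (hUconn : IsPreconnected U) (b c : ℝ) (f g : ℂ → ℂ)
    (hf : AnalyticOnNhd ℂ f U) (hg : AnalyticOnNhd ℂ g U)
    (hg' : ∀ z ∈ U, deriv g z ≠ 0)
    (hfne : ∀ z ∈ U, f z + (b : ℂ) + (c : ℂ) * Complex.I ≠ 0)
    (hode : ∀ z ∈ U,
      deriv g z * (deriv f z) ^ 2 =
        (f z + (b : ℂ) + (c : ℂ) * Complex.I) *
          (deriv g z * deriv (deriv f) z - deriv (deriv g) z * deriv f z)) :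
    ∃ z₁ z₂ : ℂ, ∀ z ∈ U,
      f z = z₁ * Complex.exp (z₂ * g z) - (b : ℂ) - (c : ℂ) * Complex.I := by
  obtain ⟨z₀, hz₀⟩ := hUne
  set K : ℂ := (b : ℂ) + (c : ℂ) * Complex.I with hK
  -- F z := f z + b + c i, nonvanishing
  have hFne : ∀ z ∈ U, f z + K ≠ 0 := by
    intro z hz; have := hfne z hz; rwa [hK, ← add_assoc]
  have hf' : AnalyticOnNhd ℂ (deriv f) U := hf.deriv
  have hg'' : AnalyticOnNhd ℂ (deriv g) U := hg.deriv
  -- the function h := f' / (g' * (f + K))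
  set N : ℂ → ℂ := fun z => deriv g z * (f z + K) with hN
  have hNana : AnalyticOnNhd ℂ N U :=
    hg''.mul (hf.add analyticOnNhd_const)
  have hNne : ∀ z ∈ U, N z ≠ 0 := fun z hz => mul_ne_zero (hg' z hz) (hFne z hz)
  set h : ℂ → ℂ := fun z => deriv f z / N z with hh
  have hhana : AnalyticOnNhd ℂ h U := hf'.div hNana hNne
  -- derivative of h is zero on U
  have hdh : ∀ z ∈ U, deriv h z = 0 := by
    intro z hz
    have hDf : HasDerivAt (deriv f) (deriv (deriv f) z) z :=
      ((hf' z hz).differentiableAt).hasDerivAt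
    have hDg : HasDerivAt (deriv g) (deriv (deriv g) z) z :=
      ((hg'' z hz).differentiableAt).hasDerivAt
    have hDF : HasDerivAt (fun w => f w + K) (deriv f z) z := by
      simpa using (((hf z hz).differentiableAt).hasDerivAt).add_const K
    have hDN : HasDerivAt N (deriv (deriv g) z * (f z + K) + deriv g z * deriv f z) z :=
      hDg.mul hDF
    have hDh : HasDerivAt h
        ((deriv (deriv f) z * N z -
          deriv f z * (deriv (deriv g) z * (f z + K) + deriv g z * deriv f z)) / (N z) ^ 2) z :=
      hDf.div hDN (hNne z hz)
    rw [hDh.deriv]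
    have hODE' : deriv g z * (deriv f z) ^ 2 =
        (f z + K) * (deriv g z * deriv (deriv f) z - deriv (deriv g) z * deriv f z) := by
      rw [hK, ← add_assoc]; exact hode z hz
    have h2 : deriv (deriv f) z * N z -
        deriv f z * (deriv (deriv g) z * (f z + K) + deriv g z * deriv f z) = 0 := by
      simp only [hN]
      linear_combination -hODE'
    rw [h2, zero_div]
  -- so h is a constant z₂
  have hconst := const_of_deriv_zero_aux U hU hUconn h hhana hdh hz₀
  set z₂ : ℂ := h z₀ with hz₂
  have hrel : ∀ z ∈ U, deriv f z = z₂ * (deriv g z * (f z + K)) := by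
    intro z hz
    have h1 : deriv f z / N z = z₂ := hconst z hz
    rw [div_eq_iff (hNne z hz)] at h1
    simpa [hN, mul_comm] using h1
  -- second step: φ := (f + K) * exp (-(z₂ * g)) is constant
  set φ : ℂ → ℂ := fun z => (f z + K) * Complex.exp (-(z₂ * g z)) with hφ
  have hφana : AnalyticOnNhd ℂ φ U := by
    apply (hf.add analyticOnNhd_const).mul
    exact fun z hz => ((analyticAt_const.mul (hg z hz)).neg).cexp
  have hdφ : ∀ z ∈ U, deriv φ z = 0 := by
    intro z hz
    have hDF : HasDerivAt (fun w => f w + K) (deriv f z) z := by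
      simpa using (((hf z hz).differentiableAt).hasDerivAt).add_const K
    have hDg : HasDerivAt g (deriv g z) z := ((hg z hz).differentiableAt).hasDerivAt
    have hDe : HasDerivAt (fun w => Complex.exp (-(z₂ * g w)))
        (Complex.exp (-(z₂ * g z)) * (-(z₂ * deriv g z))) z := by
      have h1 : HasDerivAt (fun w => -(z₂ * g w)) (-(z₂ * deriv g z)) z :=
        ((hDg.const_mul z₂)).neg
      exact h1.cexp
    have hDφ : HasDerivAt φ
        (deriv f z * Complex.exp (-(z₂ * g z)) +
          (f z + K) * (Complex.exp (-(z₂ * g z)) * (-(z₂ * deriv g z)))) z :=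
      hDF.mul hDe
    rw [hDφ.deriv, hrel z hz]
    ring
  have hφconst := const_of_deriv_zero_aux U hU hUconn φ hφana hdφ hz₀
  refine ⟨φ z₀, z₂, fun z hz => ?_⟩
  have h1 := hφconst z hz
  rw [hφ] at h1
  have hexp : Complex.exp (-(z₂ * g z)) ≠ 0 := Complex.exp_ne_zero _
  have h2 : f z + K = φ z₀ * Complex.exp (z₂ * g z) := by
    have := congrArg (fun w => w * Complex.exp (z₂ * g z)) h1
    simp only at this
    rw [mul_assoc, ← Complex.exp_add, neg_add_cancel, Complex.exp_zero, mul_one] at this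
    exact this
  rw [hK] at h2
  have : f z = φ z₀ * Complex.exp (z₂ * g z) - ((b:ℂ) + (c:ℂ)*Complex.I) := by
    rw [← h2]; ring
  rw [this]; ring
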